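/- If S ⊆ ℕ^k is recognizable then its Parikh preimage φ⁻¹(S) ⊆ A* is regular, and consequently S = φ(φ⁻¹(S)) is rational; hence every recognizable subset of ℕ^k is rational. -/

import Mathlib

open Pointwise

/-- Rational subsets of `ℕ^k`: built from finite sets by union, pointwise addition and
submonoid generation (star). -/
inductive IsRat {k : ℕ} : Set (Fin k → ℕ) → Prop
  | of_finite {s : Set (Fin k → ℕ)} : s.Finite → IsRat s
  | union {s t : Set (Fin k → ℕ)} : IsRat s → IsRat t → IsRat (s ∪ t)
  | add {s t : Set (Fin k → ℕ)} : IsRat s → IsRat t → IsRat (s + t)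
  | star {s : Set (Fin k → ℕ)} : IsRat s → IsRat (AddSubmonoid.closure s : Set (Fin k → ℕ))

/-- The Parikh map over the alphabet `Fin k`. -/
def parikh {k : ℕ} (w : List (Fin k)) : Fin k → ℕ := fun j => w.count j

/-- A subset of `ℕ^k` is recognizable if its Parikh preimage is a regular language. -/
def Recognizable {k : ℕ} (S : Set (Fin k → ℕ)) : Prop :=
  Language.IsRegular {w : List (Fin k) | parikh w ∈ S}

namespace ParikhAux

variable {k : ℕ}

def word (x : Fin k → ℕ) : List (Fin k) :=
  (List.finRange k).flatMap fun i => List.replicate (x i) i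

lemma parikh_word (x : Fin k → ℕ) : parikh (word x) = x := by
  funext j
  show ((List.finRange k).flatMap fun i => List.replicate (x i) i).count j = x j
  rw [List.count_flatMap, ← Fin.sum_univ_def]
  rw [Finset.sum_eq_single j (fun i _ hij => by simp [List.count_replicate, hij, Ne.symm hij]) (by simp)]
  simp [List.count_replicate]

lemma parikh_append (u v : List (Fin k)) : parikh (u ++ v) = parikh u + parikh v := by
  funext j; simp [parikh, List.count_append]

lemma isRat_biUnion {ι : Type*} {s : Set ι} (hs : s.Finite) (f : ι → Set (Fin k → ℕ)) :
    (∀ i ∈ s, IsRat (f i)) → IsRat (⋃ i ∈ s, f i) := by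
  refine Set.Finite.induction_on
    (motive := fun s _ => (∀ i ∈ s, IsRat (f i)) → IsRat (⋃ i ∈ s, f i)) _ hs ?_ ?_
  · intro _; simpa using IsRat.of_finite Set.finite_empty
  · intro a s _ _ ih h
    rw [Set.biUnion_insert]
    exact (h _ (Set.mem_insert _ _)).union (ih fun i hi => h i (Set.mem_insert_of_mem _ hi))

lemma mem_finsetSum {ι : Type*} [DecidableEq ι] (t : Finset ι) (A : ι → Set (Fin k → ℕ))
    (x : Fin k → ℕ) :
    x ∈ ∑ i ∈ t, A i ↔ ∃ f : ι → (Fin k → ℕ), (∀ i ∈ t, f i ∈ A i) ∧ x = ∑ i ∈ t, f i := by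
  induction t using Finset.induction_on generalizing x with
  | empty =>
      simp only [Finset.sum_empty]
      constructor
      · intro hx
        exact ⟨fun _ => 0, by simp, by simpa [Set.mem_zero] using hx⟩
      · rintro ⟨f, -, rfl⟩; simp [Set.mem_zero]
  | insert a t ha ih =>
      simp only [Finset.sum_insert ha]
      constructor
      · intro hx
        rw [Set.mem_add] at hx
        obtain ⟨u, hu, v, hv, huv⟩ := hx
        obtain ⟨f, hf, rfl⟩ := (ih v).1 hv
        refine ⟨Function.update f a u, ?_, ?_⟩
        · intro i hi
          rcases Finset.mem_insert.1 hi with rfl | hit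
          · simpa using hu
          · rw [Function.update_of_ne (ne_of_mem_of_not_mem hit ha)]
            exact hf i hit
        · rw [← huv, Function.update_self]
          congr 1
          exact (Finset.sum_congr rfl fun i hi =>
            Function.update_of_ne (ne_of_mem_of_not_mem hi ha) _ _).symm
      · rintro ⟨f, hf, rfl⟩
        rw [Set.mem_add]
        exact ⟨f a, hf a (Finset.mem_insert_self _ _), ∑ i ∈ t, f i,
          (ih _).2 ⟨f, fun i hi => hf i (Finset.mem_insert_of_mem hi), rfl⟩, rfl⟩

lemma isRat_finsetSum {ι : Type*} (t : Finset ι) (A : ι → Set (Fin k → ℕ)) :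
    (∀ i ∈ t, IsRat (A i)) → IsRat (∑ i ∈ t, A i) := by
  classical
  induction t using Finset.induction_on with
  | empty =>
      intro _
      rw [Finset.sum_empty]
      exact IsRat.of_finite Set.finite_zero
  | insert _ _ ha ih =>
      intro h
      rw [Finset.sum_insert ha]
      exact (h _ (Finset.mem_insert_self _ _)).add
        (ih fun i hi => h i (Finset.mem_insert_of_mem hi))

end ParikhAux

open ParikhAux

/-- If `S ⊆ ℕ^k` is recognizable then its Parikh preimage is regular, `S` is the Parikh
image of that preimage, and consequently `S` is rational. -/
theorem recognizable_isRat {k : ℕ} (S : Set (Fin k → ℕ)) (hS : Recognizable S) :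
    Language.IsRegular {w : List (Fin k) | parikh w ∈ S} ∧
      S = {x : Fin k → ℕ | ∃ w ∈ {w : List (Fin k) | parikh w ∈ S}, x = parikh w} ∧
      IsRat S := by
  classical
  refine ⟨hS, ?_, ?_⟩
  · ext x
    constructor
    · intro hx
      exact ⟨word x, by simpa [Set.mem_setOf_eq, parikh_word] using hx, (parikh_word x).symm⟩
    · rintro ⟨w, hw, rfl⟩
      exact hw
  obtain ⟨σ, fσ, M, hM⟩ := hS
  -- key: membership of x + z in S is determined by the state reached on `word x`
  have key : ∀ x z : Fin k → ℕ,
      (x + z ∈ S ↔ M.evalFrom (M.evalFrom M.start (word x)) (word z) ∈ M.accept) := by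
    intro x z
    have h1 : (word x ++ word z) ∈ M.accepts ↔ x + z ∈ S := by
      rw [hM]
      show parikh (word x ++ word z) ∈ S ↔ _
      rw [parikh_append, parikh_word, parikh_word]
    rw [← h1, DFA.mem_accepts]
    show M.evalFrom M.start (word x ++ word z) ∈ M.accept ↔ _
    rw [DFA.evalFrom_of_append]
  have keyR : ∀ x y : Fin k → ℕ, M.evalFrom M.start (word x) = M.evalFrom M.start (word y) →
      ∀ z, (x + z ∈ S ↔ y + z ∈ S) := by
    intro x y h z
    rw [key x z, key y z, h]
  have congrR : ∀ x y w : Fin k → ℕ, (∀ z, (x + z ∈ S ↔ y + z ∈ S)) →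
      ∀ z, (x + w + z ∈ S ↔ y + w + z ∈ S) := by
    intro x y w h z
    simpa [add_assoc] using h (w + z)
  -- pigeonhole per coordinate
  have pigeon : ∀ i : Fin k, ∃ t p : ℕ, 0 < p ∧
      ∀ z, ((Pi.single i t : Fin k → ℕ) + z ∈ S ↔ (Pi.single i (t + p) : Fin k → ℕ) + z ∈ S) := by
    intro i
    obtain ⟨a, b, hab, heq⟩ :=
      Finite.exists_ne_map_eq_of_infinite (fun n : ℕ => M.evalFrom M.start (word (Pi.single i n : Fin k → ℕ)))
    rcases hab.lt_or_gt with h | h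
    · refine ⟨a, b - a, by omega, ?_⟩
      have := keyR _ _ heq
      rwa [show a + (b - a) = b by omega]
    · refine ⟨b, a - b, by omega, ?_⟩
      have := keyR _ _ heq.symm
      rwa [show b + (a - b) = a by omega]
  choose t p hp hR using pigeon
  set T : ℕ := ∑ i, t i with hT
  set P : ℕ := ∏ i, p i with hP
  have hPpos : 0 < P := Finset.prod_pos fun i _ => hp i
  have hPdvd : ∀ i, p i ∣ P := fun i => Finset.dvd_prod_of_mem p (Finset.mem_univ i)
  have hTi : ∀ i, t i ≤ T := fun i =>
    Finset.single_le_sum (fun _ _ => Nat.zero_le _) (Finset.mem_univ i)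
  have step1 : ∀ i, ∀ z, ((Pi.single i T : Fin k → ℕ) + z ∈ S ↔ (Pi.single i (T + p i) : Fin k → ℕ) + z ∈ S) := by
    intro i z
    have e1 : (Pi.single i (t i) : Fin k → ℕ) + Pi.single i (T - t i) = Pi.single i T := by
      rw [← Pi.single_add, show t i + (T - t i) = T from by have := hTi i; omega]
    have e2 : (Pi.single i (t i + p i) : Fin k → ℕ) + Pi.single i (T - t i) = Pi.single i (T + p i) := by
      rw [← Pi.single_add, show t i + p i + (T - t i) = T + p i from by have := hTi i; omega]
    have h2 := congrR _ _ (Pi.single i (T - t i)) (hR i) z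
    rwa [e1, e2] at h2
  have step2 : ∀ i m, ∀ z, ((Pi.single i T : Fin k → ℕ) + z ∈ S ↔ (Pi.single i (T + m * p i) : Fin k → ℕ) + z ∈ S) := by
    intro i m
    induction m with
    | zero => simp
    | succ m ih =>
        intro z
        have h2 := congrR _ _ (Pi.single i (m * p i)) (step1 i) z
        have e1 : (Pi.single i T : Fin k → ℕ) + Pi.single i (m * p i) = Pi.single i (T + m * p i) := by
          rw [← Pi.single_add]
        have e2 : (Pi.single i (T + p i) : Fin k → ℕ) + Pi.single i (m * p i)
            = Pi.single i (T + (m + 1) * p i) := by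
          rw [← Pi.single_add, show T + p i + m * p i = T + (m + 1) * p i from by ring]
        rw [e1, e2] at h2
        exact (ih z).trans h2
  have stepP : ∀ i, ∀ z, ((Pi.single i T : Fin k → ℕ) + z ∈ S ↔ (Pi.single i (T + P) : Fin k → ℕ) + z ∈ S) := by
    intro i z
    have := step2 i (P / p i) z
    rwa [Nat.div_mul_cancel (hPdvd i)] at this
  have reduce : ∀ (x : Fin k → ℕ) i, T ≤ x i →
      ∀ z, (x + z ∈ S ↔ (x + Pi.single i P) + z ∈ S) := by
    intro x i hTx z
    have h2 := congrR _ _ (x - Pi.single i T) (stepP i) z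
    have e1 : Pi.single i T + (x - Pi.single i T) = x := by
      funext j
      rcases eq_or_ne j i with rfl | h
      · simp only [Pi.add_apply, Pi.sub_apply, Pi.single_eq_same]; omega
      · simp [Pi.single_eq_of_ne h]
    have e2 : Pi.single i (T + P) + (x - Pi.single i T) = x + Pi.single i P := by
      funext j
      rcases eq_or_ne j i with rfl | h
      · simp only [Pi.add_apply, Pi.sub_apply, Pi.single_eq_same]; omega
      · simp [Pi.single_eq_of_ne h]
    rwa [e1, e2] at h2
  set ρ : ℕ → ℕ := fun n => if n < T then n else T + (n - T) % P with hρ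
  have hρ_lt : ∀ n, ρ n < T + P := by
    intro n
    simp only [hρ]
    split
    · omega
    · have := Nat.mod_lt (n - T) hPpos; omega
  have hρ_fix : ∀ n, n < T + P → ρ n = n := by
    intro n hn
    simp only [hρ]
    split
    · rfl
    · rw [Nat.mod_eq_of_lt (by omega)]; omega
  have hρ_idem : ∀ n, ρ (ρ n) = ρ n := fun n => hρ_fix _ (hρ_lt n)
  have hρ_shift : ∀ n, T + P ≤ n → ρ n = ρ (n - P) := by
    intro n hn
    simp only [hρ]
    rw [if_neg (by omega), if_neg (by omega)]
    have e : n - T = (n - P - T) + P := by omega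
    rw [e, Nat.add_mod_right]
  -- main reduction: x and ρ ∘ x have the same "future"
  have main : ∀ (x : Fin k → ℕ) (z : Fin k → ℕ),
      (x + z ∈ S ↔ (fun j => ρ (x j)) + z ∈ S) := by
    suffices H : ∀ n (x : Fin k → ℕ), (∑ j, x j) = n →
        ∀ z, (x + z ∈ S ↔ (fun j => ρ (x j)) + z ∈ S) by
      exact fun x z => H _ x rfl z
    intro n
    induction n using Nat.strong_induction_on with
    | _ n ih =>
      intro x hxn z
      by_cases hbig : ∃ i, T + P ≤ x i
      · obtain ⟨i, hi⟩ := hbig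
        set y : Fin k → ℕ := x - Pi.single i P with hy
        have hyx : y + Pi.single i P = x := by
          funext j
          rcases eq_or_ne j i with rfl | h
          · simp only [hy, Pi.add_apply, Pi.sub_apply, Pi.single_eq_same]; omega
          · simp [hy, Pi.single_eq_of_ne h]
        have hyi : T ≤ y i := by
          simp only [hy, Pi.sub_apply, Pi.single_eq_same]; omega
        have hred := reduce y i hyi z
        rw [hyx] at hred
        have hsum : ∑ j, y j < n := by
          rw [← hxn]
          refine Finset.sum_lt_sum (fun j _ => ?_) ⟨i, Finset.mem_univ i, ?_⟩
          · simp only [hy, Pi.sub_apply]; omega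
          · simp only [hy, Pi.sub_apply, Pi.single_eq_same]; omega
        have hρy : (fun j => ρ (y j)) = fun j => ρ (x j) := by
          funext j
          rcases eq_or_ne j i with rfl | h
          · have : y j = x j - P := by simp [hy]
            rw [this, ← hρ_shift _ hi]
          · congr 1; simp [hy, Pi.single_eq_of_ne h]
        have hIH := ih _ hsum y rfl z
        rw [hρy] at hIH
        exact hred.symm.trans hIH
      · push_neg at hbig
        have : (fun j => ρ (x j)) = x := funext fun j => hρ_fix _ (hbig j)
        rw [this]
  -- S as a finite union of "boxes"
  set D : Set (Fin k → ℕ) := {c | c ∈ S ∧ ∀ i, ρ (c i) = c i} with hD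
  have hDfin : D.Finite := by
    refine Set.Finite.subset (Set.Finite.pi fun _ : Fin k => Set.finite_Iio (T + P)) ?_
    intro c hc
    rw [Set.mem_univ_pi]
    intro i
    have := hρ_lt (c i)
    rw [hc.2 i] at this
    exact this
  have hS_eq : S = ⋃ c ∈ D, {x : Fin k → ℕ | ∀ i, ρ (x i) = c i} := by
    ext x
    constructor
    · intro hx
      refine Set.mem_biUnion (show (fun j => ρ (x j)) ∈ D from ⟨?_, fun i => hρ_idem _⟩)
        (fun i => (hρ_idem _).symm ▸ rfl)
      have := main x 0
      simpa using this.1 (by simpa using hx)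
    · intro hx
      obtain ⟨c, ⟨hcS, _⟩, hxc⟩ := Set.mem_iUnion₂.1 hx
      have hc : (fun j => ρ (x j)) = c := funext fun i => hxc i
      have := main x 0
      simp only [add_zero] at this
      rw [this, hc]
      exact hcS
  rw [hS_eq]
  refine isRat_biUnion hDfin _ ?_
  rintro c ⟨-, hcfix⟩
  -- each box is a finite sum of one-coordinate sets
  have hbox : {x : Fin k → ℕ | ∀ i, ρ (x i) = c i}
      = ∑ i : Fin k, {v : Fin k → ℕ | ∃ n, ρ n = c i ∧ v = Pi.single i n} := by
    ext x
    rw [mem_finsetSum]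
    constructor
    · intro hx
      exact ⟨fun i => Pi.single i (x i), fun i _ => ⟨x i, hx i, rfl⟩,
        (Finset.univ_sum_single x).symm⟩
    · rintro ⟨f, hf, rfl⟩
      intro j
      choose m hm hfm using fun i => hf i (Finset.mem_univ i)
      have hfe : f = fun i => Pi.single i (m i) := funext hfm
      rw [hfe, Finset.univ_sum_single m]
      exact hm j
  rw [hbox]
  refine isRat_finsetSum _ _ fun i _ => ?_
  by_cases hci : c i < T
  · have : {v : Fin k → ℕ | ∃ n, ρ n = c i ∧ v = Pi.single i n} = {Pi.single i (c i)} := by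
      ext v
      constructor
      · rintro ⟨n, hn, rfl⟩
        simp only [hρ] at hn
        split at hn
        · subst hn; rfl
        · omega
      · rintro rfl
        exact ⟨c i, by simp only [hρ]; rw [if_pos hci], rfl⟩
    rw [this]
    exact IsRat.of_finite (Set.finite_singleton _)
  · push_neg at hci
    have hciP : c i < T + P := by
      have := hρ_lt (c i); rw [hcfix i] at this; exact this
    have hchar : ∀ n, ρ n = c i ↔ ∃ q, n = c i + q * P := by
      intro n
      constructor
      · intro hn
        simp only [hρ] at hn
        split at hn
        · exact ⟨0, by omega⟩
        · rename_i hnT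
          push_neg at hnT
          refine ⟨(n - T) / P, ?_⟩
          have hdm := Nat.div_add_mod (n - T) P
          have e : (n - T) / P * P = P * ((n - T) / P) := Nat.mul_comm _ _
          omega
      · rintro ⟨q, rfl⟩
        simp only [hρ]
        rw [if_neg (by omega)]
        have e : c i + q * P - T = (c i - T) + q * P := by omega
        rw [e, Nat.add_mul_mod_self_right, Nat.mod_eq_of_lt (by omega)]
        omega
    have : {v : Fin k → ℕ | ∃ n, ρ n = c i ∧ v = Pi.single i n}
        = ({Pi.single i (c i)} : Set (Fin k → ℕ)) + (AddSubmonoid.closure ({Pi.single i P} : Set (Fin k → ℕ)) : Set (Fin k → ℕ)) := by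
      ext v
      rw [Set.mem_add]
      constructor
      · rintro ⟨n, hn, rfl⟩
        obtain ⟨q, rfl⟩ := (hchar n).1 hn
        refine ⟨Pi.single i (c i), rfl, q • Pi.single i P,
          AddSubmonoid.mem_closure_singleton.2 ⟨q, rfl⟩, ?_⟩
        rw [← Pi.single_smul, smul_eq_mul, ← Pi.single_add,
          show c i + q * P = c i + P * q from by ring]
      · rintro ⟨a, rfl, b, hb, rfl⟩
        obtain ⟨q, rfl⟩ := AddSubmonoid.mem_closure_singleton.1 hb
        refine ⟨c i + q * P, (hchar _).2 ⟨q, rfl⟩, ?_⟩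
        rw [← Pi.single_smul, smul_eq_mul, ← Pi.single_add,
          show c i + q * P = c i + P * q from by ring]
    rw [this]
    exact (IsRat.of_finite (Set.finite_singleton _)).add
      ((IsRat.of_finite (Set.finite_singleton _)).star)
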